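/- arXiv:1409.0467 — 2 statements merged into one kernel-verified Lean document; each statement's English description precedes it below -/
import Mathlib

section
/- Let (R, m, k) be a Noetherian local ring of dimension d and prime characteristic p, and let M be a finitely generated R-module. Then there exists a constant C > 0 such that for all e ≥ 0 and every m-primary ideal I containing m^[q] with q = p^e, one has λ(M/IM) ≤ C·q^{dim M}. -/
open IsLocalRing

/-- The `q`-th Frobenius power `I^[q]`: the ideal generated by `q`-th powers of elements of `I`. -/
noncomputable def frobPow {R : Type*} [CommRing R] (I : Ideal R) (q : ℕ) : Ideal R :=
  Ideal.span ((fun x => x ^ q) '' (I : Set R))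

/-- The length of an `R`-module, as a natural number. -/
noncomputable def len (R M : Type*) [Ring R] [AddCommGroup M] [Module R M] : ℕ :=
  (WithBot.unbotD 0 (Order.krullDim (Submodule R M))).toNat

/-- `I` is `m`-primary: a proper ideal containing a power of the maximal ideal. -/
def IsMPrimary {R : Type*} [CommRing R] [IsLocalRing R] (I : Ideal R) : Prop :=
  I ≠ ⊤ ∧ ∃ n : ℕ, maximalIdeal R ^ n ≤ I


section LenLE

/-- Every strict chain of submodules has length at most `n`. -/
def LenLE (R M : Type*) [Ring R] [AddCommGroup M] [Module R M] (n : ℕ) : Prop :=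
  ∀ p : LTSeries (Submodule R M), p.length ≤ n

variable {R : Type*} [CommRing R]

lemma lenLE_of_subsingleton {M : Type*} [AddCommGroup M] [Module R M] [Subsingleton M]
    (n : ℕ) : LenLE R M n := by
  intro p
  by_contra h
  have h1 : 0 < p.length := by omega
  have := p.step ⟨0, h1⟩
  exact absurd (Subsingleton.elim _ _) (p.strictMono (Fin.castSucc_lt_succ (i := ⟨0, h1⟩))).ne

lemma LenLE.of_surjective {M N : Type*} [AddCommGroup M] [Module R M] [AddCommGroup N]
    [Module R N] (f : M →ₗ[R] N) (hf : Function.Surjective f) {n : ℕ}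
    (h : LenLE R M n) : LenLE R N n := by
  intro p
  have hsm : StrictMono (fun P : Submodule R N => P.comap f) := fun P Q hPQ =>
    lt_of_le_of_ne (Submodule.comap_mono hPQ.le)
      (fun e => hPQ.ne (Submodule.comap_injective_of_surjective hf e))
  have := h (p.map _ hsm)
  simpa using this

lemma height_add_one_le {α : Type*} [Preorder α] {a b : α} (h : a < b) :
    Order.height a + 1 ≤ Order.height b := by
  rw [Order.height_eq_iSup_lt_height b]
  exact le_iSup₂_of_le a h le_rfl

lemma pair_chain_le {α β : Type*} [Preorder α] [Preorder β] :
    ∀ (L : ℕ) (f : Fin (L+1) → α) (g : Fin (L+1) → β), Monotone f → Monotone g →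
    (∀ i : Fin L, f i.castSucc < f i.succ ∨ g i.castSucc < g i.succ) →
    (L : ℕ∞) ≤ Order.height (f (Fin.last L)) + Order.height (g (Fin.last L))
  | 0, _, _, _, _, _ => by simp
  | (L+1), f, g, hf, hg, hstep => by
    have IH := pair_chain_le L (fun i => f i.castSucc) (fun i => g i.castSucc)
      (hf.comp Fin.strictMono_castSucc.monotone) (hg.comp Fin.strictMono_castSucc.monotone)
      (fun i => by simpa only [Fin.succ_castSucc] using hstep i.castSucc)
    set c : Fin (L+2) := (Fin.last L).castSucc with hc
    have hlast : (Fin.last L).succ = Fin.last (L+1) := Fin.succ_last L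
    have hcle : c ≤ Fin.last (L+1) := le_top
    push_cast
    rcases hstep (Fin.last L) with hlt | hlt
    · calc (L : ℕ∞) + 1 ≤ (Order.height (f c) + Order.height (g c)) + 1 :=
            add_le_add IH le_rfl
        _ = (Order.height (f c) + 1) + Order.height (g c) := by ring
        _ ≤ Order.height (f (Fin.last (L+1))) + Order.height (g (Fin.last (L+1))) := by
            rw [hlast] at hlt
            exact add_le_add (height_add_one_le hlt) (Order.height_mono (hg hcle))
    · calc (L : ℕ∞) + 1 ≤ (Order.height (f c) + Order.height (g c)) + 1 :=
            add_le_add IH le_rfl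
        _ = Order.height (f c) + (Order.height (g c) + 1) := by ring
        _ ≤ Order.height (f (Fin.last (L+1))) + Order.height (g (Fin.last (L+1))) := by
            rw [hlast] at hlt
            exact add_le_add (Order.height_mono (hf hcle)) (height_add_one_le hlt)

end LenLE

section LenLE2
variable {R : Type*} [CommRing R]


lemma LenLE.ext {M : Type*} [AddCommGroup M] [Module R M] (N : Submodule R M) {a b : ℕ}
    (hN : LenLE R N a) (hQ : LenLE R (M ⧸ N) b) : LenLE R M (a + b) := by
  intro p
  set f : Fin (p.length + 1) → Submodule R N := fun i => (p i).comap N.subtype with hfdef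
  set g : Fin (p.length + 1) → Submodule R (M ⧸ N) := fun i => (p i).map N.mkQ with hgdef
  have hf : Monotone f := fun i j h => Submodule.comap_mono (p.monotone h)
  have hg : Monotone g := fun i j h => Submodule.map_mono (p.monotone h)
  have hstep : ∀ i : Fin p.length, f i.castSucc < f i.succ ∨ g i.castSucc < g i.succ := by
    intro i
    by_contra hcon
    push_neg at hcon
    have hle : i.castSucc ≤ i.succ := (Fin.castSucc_lt_succ (i := i)).le
    have h1 : f i.castSucc = f i.succ :=
      ((hf hle).lt_or_eq).resolve_left hcon.1
    have h2 : g i.castSucc = g i.succ :=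
      ((hg hle).lt_or_eq).resolve_left hcon.2
    have hinf : p i.castSucc ⊓ N = p i.succ ⊓ N := by
      have := congrArg (Submodule.map N.subtype) h1
      simpa [hfdef, Submodule.map_comap_subtype, inf_comm] using this
    have hsup : p i.castSucc ⊔ N = p i.succ ⊔ N := by
      have := congrArg (Submodule.comap N.mkQ) h2
      simpa [hgdef, Submodule.comap_map_mkQ, sup_comm] using this
    have : p i.castSucc = p i.succ :=
      eq_of_le_of_inf_le_of_sup_le (p.strictMono (Fin.castSucc_lt_succ (i := i))).le (le_of_eq hinf.symm) (le_of_eq hsup.symm)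
    exact (p.strictMono (Fin.castSucc_lt_succ (i := i))).ne this
  have key := pair_chain_le p.length f g hf hg hstep
  have hfa : Order.height (f (Fin.last p.length)) ≤ (a : ℕ∞) :=
    Order.height_le (fun q _ => by exact_mod_cast Nat.cast_le.mpr (hN q))
  have hgb : Order.height (g (Fin.last p.length)) ≤ (b : ℕ∞) :=
    Order.height_le (fun q _ => by exact_mod_cast Nat.cast_le.mpr (hQ q))
  have : (p.length : ℕ∞) ≤ ((a + b : ℕ) : ℕ∞) := by
    calc (p.length : ℕ∞) ≤ _ := key
      _ ≤ (a : ℕ∞) + (b : ℕ∞) := add_le_add hfa hgb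
      _ = ((a + b : ℕ) : ℕ∞) := by push_cast; ring
  exact_mod_cast this

lemma len_le_of_lenLE {M : Type*} [AddCommGroup M] [Module R M] {n : ℕ}
    (h : LenLE R M n) :
    ((WithBot.unbotD 0 (Order.krullDim (Submodule R M))).toNat) ≤ n := by
  rw [Order.krullDim_eq_iSup_length, WithBot.unbotD_coe]
  have hsup : (⨆ p : LTSeries (Submodule R M), (p.length : ℕ∞)) ≤ (n : ℕ∞) :=
    iSup_le fun p => Nat.cast_le.mpr (h p)
  exact ENat.toNat_le_of_le_coe hsup

lemma lenLE_one_of_dichotomy {M : Type*} [AddCommGroup M] [Module R M]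
    (h : ∀ P : Submodule R M, P = ⊥ ∨ P = ⊤) : LenLE R M 1 := by
  intro p
  by_contra hcon
  have h2 : 1 < p.length := by omega
  have s0 := p.step ⟨0, by omega⟩
  have s1 := p.step ⟨1, by omega⟩
  rcases h (p ⟨1, by omega⟩) with hb | ht
  · have : p (⟨0, by omega⟩ : Fin p.length).castSucc < ⊥ := by
      have : ((⟨0, by omega⟩ : Fin p.length).succ : Fin (p.length+1)) = ⟨1, by omega⟩ := by
        ext; simp
      rw [this, hb] at s0; exact s0
    exact absurd this (by simp)
  · have : (⊤ : Submodule R M) < p (⟨1, by omega⟩ : Fin p.length).succ := by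
      have : ((⟨1, by omega⟩ : Fin p.length).castSucc : Fin (p.length+1)) = ⟨1, by omega⟩ := by
        ext; simp
      rw [this, ht] at s1; exact s1
    exact absurd this (by simp)

end LenLE2

section Torsion
variable {R : Type*} [CommRing R] [IsLocalRing R]

lemma lenLE_cyclic_torsion {V : Type*} [AddCommGroup V] [Module R V] (v : V)
    (hv : ∀ r ∈ maximalIdeal R, r • v = 0) :
    LenLE R (Submodule.span R {v} : Submodule R V) 1 := by
  apply lenLE_one_of_dichotomy
  intro P
  by_cases hP : P = ⊥
  · exact Or.inl hP
  · right
    obtain ⟨w, hwP, hw0⟩ := Submodule.exists_mem_ne_zero_of_ne_bot hP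
    obtain ⟨r, hr⟩ := Submodule.mem_span_singleton.mp w.2
    have hrm : r ∉ maximalIdeal R := by
      intro hrmem
      apply hw0
      have : (w : V) = 0 := by rw [← hr]; exact hv r hrmem
      exact Subtype.ext this
    have hru : IsUnit r := by
      by_contra hnr
      exact hrm (IsLocalRing.mem_maximalIdeal r |>.mpr (mem_nonunits_iff.mpr hnr))
    obtain ⟨u, hu⟩ := hru
    rw [eq_top_iff]
    rintro ⟨z, hz⟩ -
    obtain ⟨s, hs⟩ := Submodule.mem_span_singleton.mp hz
    have hscal : (s * ↑u⁻¹) * r = s := by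
      rw [mul_assoc, ← hu, Units.inv_mul, mul_one]
    have : ((s * ↑u⁻¹) • w : Submodule.span R {v}) = ⟨z, hz⟩ := by
      apply Subtype.ext
      show (s * ↑u⁻¹) • (w : V) = z
      rw [← hr, smul_smul, hscal, hs]
    rw [← this]
    exact P.smul_mem _ hwP

lemma exists_lenLE_of_torsion_list :
    ∀ (n : ℕ) (V : Type*) [AddCommGroup V] [Module R V] (l : List V), l.length = n →
      Submodule.span R {x | x ∈ l} = ⊤ →
      maximalIdeal R • (⊤ : Submodule R V) = ⊥ → ∃ m : ℕ, LenLE R V m := by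
  intro n
  induction n with
  | zero =>
    intro V _ _ l hl hspan _
    rw [List.length_eq_zero_iff] at hl
    subst hl
    have hbot : (⊥ : Submodule R V) = ⊤ := by simpa using hspan
    have : Subsingleton V := by
      constructor
      intro x y
      have hx : x ∈ (⊥ : Submodule R V) := by rw [hbot]; trivial
      have hy : y ∈ (⊥ : Submodule R V) := by rw [hbot]; trivial
      simp only [Submodule.mem_bot] at hx hy
      rw [hx, hy]
    exact ⟨0, lenLE_of_subsingleton 0⟩
  | succ n IH =>
    intro V _ _ l hl hspan htor
    obtain ⟨v, t, rfl⟩ : ∃ v t, l = v :: t := by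
      cases l with
      | nil => simp at hl
      | cons v t => exact ⟨v, t, rfl⟩
    set W : Submodule R V := Submodule.span R {v} with hW
    have hset : {x | x ∈ v :: t} = insert v {x | x ∈ t} := by
      ext x; simp [List.mem_cons]
    have hVspan : Submodule.span R {v} ⊔ Submodule.span R {x | x ∈ t} = ⊤ := by
      rw [← Submodule.span_insert, ← hset, hspan]
    -- quotient
    have hmapW : Submodule.map W.mkQ W = ⊥ := Submodule.mkQ_map_self W
    have hQspan : Submodule.span R {x | x ∈ t.map W.mkQ} = ⊤ := by
      have himg : {x | x ∈ t.map W.mkQ} = W.mkQ '' {x | x ∈ t} := by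
        ext x; simp [List.mem_map]
      rw [himg, Submodule.span_image]
      have : Submodule.map W.mkQ (Submodule.span R {v} ⊔ Submodule.span R {x | x ∈ t}) = ⊤ := by
        rw [hVspan, Submodule.map_top, Submodule.range_mkQ]
      rw [Submodule.map_sup, ← hW, hmapW, bot_sup_eq] at this
      exact this
    have hQtor : maximalIdeal R • (⊤ : Submodule R (V ⧸ W)) = ⊥ := by
      have htop : (⊤ : Submodule R (V ⧸ W)) = Submodule.map W.mkQ ⊤ := by
        rw [Submodule.map_top, Submodule.range_mkQ]
      rw [htop, ← Submodule.map_smul'', htor, Submodule.map_bot]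
    obtain ⟨b, hb⟩ := IH (V ⧸ W) (t.map W.mkQ) (by simp only [List.length_map]; simp at hl; omega) hQspan hQtor
    have hWlen : LenLE R W 1 := by
      apply lenLE_cyclic_torsion
      intro r hr
      have : r • v ∈ maximalIdeal R • (⊤ : Submodule R V) :=
        Submodule.smul_mem_smul hr trivial
      rw [htor] at this
      simpa using this
    exact ⟨1 + b, hWlen.ext W hb⟩

lemma exists_lenLE_of_pow_smul_eq_bot [IsNoetherianRing R] :
    ∀ (t : ℕ) (K : Type*) [AddCommGroup K] [Module R K] [Module.Finite R K],
      (maximalIdeal R ^ t) • (⊤ : Submodule R K) = ⊥ → ∃ n : ℕ, LenLE R K n := by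
  intro t
  induction t with
  | zero =>
    intro K _ _ _ h
    rw [pow_zero, Ideal.one_eq_top, Submodule.top_smul] at h
    have : Subsingleton K := by
      constructor
      intro x y
      have hx : x ∈ (⊤ : Submodule R K) := trivial
      rw [h] at hx
      have hy : y ∈ (⊥ : Submodule R K) := by rw [← h]; trivial
      simp only [Submodule.mem_bot] at hx hy
      rw [hx, hy]
    exact ⟨0, lenLE_of_subsingleton 0⟩
  | succ t IH =>
    intro K _ _ _ h
    set N : Submodule R K := (maximalIdeal R ^ t) • ⊤ with hN
    haveI : IsNoetherian R K := isNoetherian_of_isNoetherianRing_of_finite R K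
    -- bound on N
    haveI : Module.Finite R N := ⟨Submodule.fg_top N |>.mpr (IsNoetherian.noetherian N)⟩
    have hNtor : maximalIdeal R • (⊤ : Submodule R N) = ⊥ := by
      rw [eq_bot_iff]
      apply Submodule.smul_le.mpr
      rintro r hr ⟨w, hw⟩ -
      have : r • w ∈ maximalIdeal R • N := Submodule.smul_mem_smul hr hw
      have hbot : maximalIdeal R • N = ⊥ := by
        rw [hN, ← Submodule.smul_assoc]
        have : maximalIdeal R • maximalIdeal R ^ t = maximalIdeal R ^ (t+1) := by
          rw [Ideal.smul_eq_mul, ← pow_succ']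
        rw [this, h]
      rw [hbot] at this
      simp only [Submodule.mem_bot] at this
      exact (Submodule.mem_bot R).mpr (Subtype.ext (by simpa using this))
    obtain ⟨S, hS⟩ : (⊤ : Submodule R N).FG := Module.Finite.fg_top
    obtain ⟨a, ha⟩ := exists_lenLE_of_torsion_list S.toList.length N S.toList rfl
      (by rwa [show {x : N | x ∈ S.toList} = (S : Set N) by ext x; simp]) hNtor
    -- bound on K ⧸ N
    haveI : Module.Finite R (K ⧸ N) := Module.Finite.quotient R N
    have hQ : (maximalIdeal R ^ t) • (⊤ : Submodule R (K ⧸ N)) = ⊥ := by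
      have htop : (⊤ : Submodule R (K ⧸ N)) = Submodule.map N.mkQ ⊤ := by
        rw [Submodule.map_top, Submodule.range_mkQ]
      rw [htop, ← Submodule.map_smul'', ← hN]
      exact Submodule.mkQ_map_self N
    obtain ⟨b, hb⟩ := IH (K ⧸ N) hQ
    exact ⟨a + b, ha.ext N hb⟩

end Torsion

section Filtration
variable {R : Type*} [CommRing R]

/-- Transfer a length bound along a quotient presentation. -/
lemma LenLE.of_quot_surj {K Y : Type*} [AddCommGroup K] [Module R K] [AddCommGroup Y]
    [Module R Y] (f : K →ₗ[R] Y) (hsurj : Function.Surjective f) (S : Submodule R K)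
    (hker : S ≤ LinearMap.ker f) {n : ℕ} (h : LenLE R (K ⧸ S) n) : LenLE R Y n := by
  refine h.of_surjective (S.liftQ f hker) ?_
  intro y
  obtain ⟨k, rfl⟩ := hsurj y
  exact ⟨S.mkQ k, by simp⟩

lemma lenLE_quot_of_eq_top {K : Type*} [AddCommGroup K] [Module R K] {A : Submodule R K}
    (hA : A = ⊤) (n : ℕ) : LenLE R (K ⧸ A) n := by
  subst hA
  have : Subsingleton (K ⧸ (⊤ : Submodule R K)) := by
    constructor
    intro x y
    obtain ⟨a, rfl⟩ := Submodule.mkQ_surjective _ x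
    obtain ⟨b, rfl⟩ := Submodule.mkQ_surjective _ y
    exact (Submodule.Quotient.eq _).mpr trivial
  exact lenLE_of_subsingleton n

lemma lemA {K : Type*} [AddCommGroup K] [Module R K] :
    ∀ (a : ℕ) (I : Ideal R) (x : R) (n : ℕ),
      LenLE R (K ⧸ ((I ⊔ Ideal.span {x}) • (⊤ : Submodule R K))) n →
      LenLE R (K ⧸ ((I ⊔ Ideal.span {x ^ a}) • (⊤ : Submodule R K))) (a * n) := by
  intro a
  induction a with
  | zero =>
    intro I x n _
    refine lenLE_quot_of_eq_top ?_ _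
    have : Ideal.span {x ^ 0} = (⊤ : Ideal R) := by
      rw [pow_zero, Ideal.span_singleton_one]
    rw [this, sup_top_eq, Submodule.top_smul]
  | succ a IH =>
    intro I x n h
    set B : Submodule R K := (I ⊔ Ideal.span {x ^ (a+1)}) • ⊤ with hB
    set N' : Submodule R (K ⧸ B) := Submodule.map B.mkQ ((Ideal.span {x ^ a}) • ⊤) with hN'
    -- bound on (K ⧸ B) ⧸ N'
    have hQN' : LenLE R ((K ⧸ B) ⧸ N') (a * n) := by
      have hIH := IH I x n h
      have hfs : Function.Surjective ⇑(N'.mkQ ∘ₗ B.mkQ) := by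
        rw [LinearMap.coe_comp]
        exact (Submodule.mkQ_surjective _).comp (Submodule.mkQ_surjective _)
      refine LenLE.of_quot_surj (N'.mkQ ∘ₗ B.mkQ) hfs _ ?_ hIH
      apply Submodule.smul_le.mpr
      rintro r hr k -
      obtain ⟨i, hi, s, hs, rfl⟩ := Submodule.mem_sup.mp hr
      rw [LinearMap.mem_ker, add_smul, map_add]
      have h1 : (N'.mkQ ∘ₗ B.mkQ) (i • k) = 0 := by
        have : i • k ∈ B := Submodule.smul_mem_smul (Submodule.mem_sup_left hi) trivial
        have hz : B.mkQ (i • k) = 0 := (Submodule.Quotient.mk_eq_zero B).mpr this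
        simp only [LinearMap.comp_apply, hz, map_zero]
      have h2 : (N'.mkQ ∘ₗ B.mkQ) (s • k) = 0 := by
        have : B.mkQ (s • k) ∈ N' :=
          Submodule.mem_map_of_mem (Submodule.smul_mem_smul hs trivial)
        have hz : N'.mkQ (B.mkQ (s • k)) = 0 := (Submodule.Quotient.mk_eq_zero N').mpr this
        simpa using hz
      rw [show (N'.mkQ ∘ₗ B.mkQ) (i • k) + (N'.mkQ ∘ₗ B.mkQ) (s • k) = 0 by rw [h1, h2, add_zero]]
    -- bound on N'
    have hN'len : LenLE R N' n := by
      have hmem : ∀ k : K, B.mkQ (x ^ a • k) ∈ N' := fun k =>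
        Submodule.mem_map_of_mem
          (Submodule.smul_mem_smul (Ideal.mem_span_singleton_self _) trivial)
      set g : K →ₗ[R] N' :=
        LinearMap.codRestrict N' (B.mkQ ∘ₗ LinearMap.lsmul R K (x ^ a)) hmem with hg
      have hgsurj : Function.Surjective g := by
        rintro ⟨y, hy⟩
        obtain ⟨u, hu, rfl⟩ := Submodule.mem_map.mp hy
        have : u ∈ LinearMap.range (LinearMap.lsmul R K (x ^ a)) := by
          revert hu
          refine fun hu => Submodule.smul_le.mpr ?_ hu
          rintro r hr m -
          obtain ⟨c, hc⟩ := Ideal.mem_span_singleton'.mp hr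
          exact ⟨c • m, by rw [LinearMap.lsmul_apply, smul_smul, ← hc, mul_comm]⟩
        obtain ⟨k, hk⟩ := this
        refine ⟨k, ?_⟩
        apply Subtype.ext
        show B.mkQ (x ^ a • k) = B.mkQ u
        rw [show x ^ a • k = u from hk]
      refine LenLE.of_quot_surj g hgsurj _ ?_ h
      apply Submodule.smul_le.mpr
      rintro r hr k -
      obtain ⟨i, hi, s, hs, rfl⟩ := Submodule.mem_sup.mp hr
      obtain ⟨c, hc⟩ := Ideal.mem_span_singleton'.mp hs
      rw [LinearMap.mem_ker]
      apply Subtype.ext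
      show B.mkQ (x ^ a • ((i + s) • k)) = 0
      have hexp : x ^ a • ((i + s) • k) = (i * x ^ a) • k + (c * x ^ (a+1)) • k := by
        rw [smul_smul, ← hc]
        rw [← add_smul]
        congr 1
        ring
      rw [hexp, map_add]
      have hmem1 : (i * x ^ a) • k ∈ B :=
        Submodule.smul_mem_smul (Submodule.mem_sup_left (Ideal.mul_mem_right _ _ hi)) trivial
      have hmem2 : (c * x ^ (a+1)) • k ∈ B :=
        Submodule.smul_mem_smul
          (Submodule.mem_sup_right (Ideal.mem_span_singleton'.mpr ⟨c, rfl⟩)) trivial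
      have hz1 : B.mkQ ((i * x ^ a) • k) = 0 := (Submodule.Quotient.mk_eq_zero B).mpr hmem1
      have hz2 : B.mkQ ((c * x ^ (a+1)) • k) = 0 := (Submodule.Quotient.mk_eq_zero B).mpr hmem2
      rw [hz1, hz2, add_zero]
    have := hN'len.ext N' hQN'
    rwa [show n + a * n = (a + 1) * n by ring] at this

lemma lemB {K : Type*} [AddCommGroup K] [Module R K] (q : ℕ) :
    ∀ (l : List R) (J : Ideal R) (n : ℕ),
      LenLE R (K ⧸ ((J ⊔ Ideal.span {y | y ∈ l}) • (⊤ : Submodule R K))) n →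
      LenLE R (K ⧸ ((J ⊔ Ideal.span ((fun z => z ^ q) '' {y | y ∈ l})) • (⊤ : Submodule R K)))
        (q ^ l.length * n) := by
  intro l
  induction l with
  | nil =>
    intro J n h
    have h1 : ((fun z => z ^ q) '' {y : R | y ∈ ([] : List R)}) = {y : R | y ∈ ([] : List R)} := by
      simp
    rw [h1]
    simpa using h
  | cons x t IH =>
    intro J n h
    have hset : {y : R | y ∈ x :: t} = insert x {y | y ∈ t} := by ext z; simp
    have h' : LenLE R (K ⧸ (((J ⊔ Ideal.span {x}) ⊔ Ideal.span {y | y ∈ t}) •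
        (⊤ : Submodule R K))) n := by
      rwa [show (J ⊔ Ideal.span {x}) ⊔ Ideal.span {y | y ∈ t}
          = J ⊔ Ideal.span {y | y ∈ x :: t} by rw [hset, Ideal.span_insert, sup_assoc]]
    have hIH := IH (J ⊔ Ideal.span {x}) n h'
    have hIH' : LenLE R (K ⧸ (((J ⊔ Ideal.span ((fun z => z ^ q) '' {y | y ∈ t}))
        ⊔ Ideal.span {x}) • (⊤ : Submodule R K))) (q ^ t.length * n) := by
      rwa [show (J ⊔ Ideal.span ((fun z => z ^ q) '' {y | y ∈ t})) ⊔ Ideal.span {x}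
          = (J ⊔ Ideal.span {x}) ⊔ Ideal.span ((fun z => z ^ q) '' {y | y ∈ t}) by
        rw [sup_assoc, sup_assoc, sup_comm (Ideal.span _)]]
    have := lemA q (J ⊔ Ideal.span ((fun z => z ^ q) '' {y | y ∈ t})) x (q ^ t.length * n) hIH'
    have heq : (J ⊔ Ideal.span ((fun z => z ^ q) '' {y | y ∈ t})) ⊔ Ideal.span {x ^ q}
        = J ⊔ Ideal.span ((fun z => z ^ q) '' {y | y ∈ x :: t}) := by
      rw [hset, Set.image_insert_eq, Ideal.span_insert, sup_assoc,
        sup_comm (Ideal.span {x ^ q})]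
    rw [heq] at this
    rwa [show q * (q ^ t.length * n) = q ^ (x :: t).length * n by
      simp [List.length_cons, pow_succ]; ring] at this

end Filtration

section Dim

universe u

variable {A : Type u} [CommRing A]

lemma prime_eq_maximal_of_dim_le_zero [IsLocalRing A]
    (h : ringKrullDim A ≤ 0) {P : Ideal A} (hP : P.IsPrime) : P = maximalIdeal A := by
  by_contra hne
  have hPle : P ≤ maximalIdeal A := IsLocalRing.le_maximalIdeal hP.ne_top
  have hlt : (⟨P, hP⟩ : PrimeSpectrum A) < ⟨maximalIdeal A, inferInstance⟩ := by
    refine lt_of_le_of_ne hPle ?_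
    intro hc
    exact hne (congrArg PrimeSpectrum.asIdeal hc)
  let s : LTSeries (PrimeSpectrum A) :=
    (RelSeries.singleton _ (⟨maximalIdeal A, inferInstance⟩ : PrimeSpectrum A)).cons _ hlt
  have hlen := Order.LTSeries.length_le_krullDim s
  have h1 : (1 : WithBot ℕ∞) ≤ ringKrullDim A := by
    have : s.length = 1 := rfl
    rw [ringKrullDim]
    simpa [this] using hlen
  have h2 : (1 : ℕ∞) ≤ 0 := by exact_mod_cast le_trans h1 h
  simp at h2

lemma exists_pow_maximalIdeal_eq_bot [IsLocalRing A] [IsNoetherianRing A]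
    (h : ringKrullDim A ≤ 0) : ∃ t : ℕ, maximalIdeal A ^ t = ⊥ := by
  have hle : maximalIdeal A ≤ nilradical A := by
    rw [nilradical_eq_sInf]
    exact le_sInf fun P hP => le_of_eq (prime_eq_maximal_of_dim_le_zero h hP).symm
  obtain ⟨t, ht⟩ := IsNoetherianRing.isNilpotent_nilradical A
  refine ⟨t, le_antisymm ?_ bot_le⟩
  calc maximalIdeal A ^ t ≤ nilradical A ^ t := Ideal.pow_right_mono hle t
    _ = ⊥ := by rw [ht]; rfl

lemma dim_quotient_le [IsLocalRing A] [IsNoetherianRing A] {c : ℕ}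
    (hdim : ringKrullDim A ≤ ((c + 1 : ℕ) : WithBot ℕ∞)) (hpos : ¬ ringKrullDim A ≤ 0) :
    ∃ x : A, x ∈ maximalIdeal A ∧ Ideal.span {x} ≠ ⊤ ∧
      ringKrullDim (A ⧸ Ideal.span {x}) ≤ ((c : ℕ) : WithBot ℕ∞) := by
  have hmmax : maximalIdeal A ∉ minimalPrimes A := by
    intro hmin
    apply hpos
    have hsub : Subsingleton (PrimeSpectrum A) := by
      constructor
      intro P Q
      have h1 : ∀ (T : PrimeSpectrum A), T.asIdeal = maximalIdeal A := by
        intro T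
        have hTle : T.asIdeal ≤ maximalIdeal A := IsLocalRing.le_maximalIdeal T.isPrime.ne_top
        exact le_antisymm hTle (hmin.2 ⟨T.isPrime, bot_le⟩ hTle)
      exact PrimeSpectrum.ext ((h1 P).trans (h1 Q).symm)
    rw [ringKrullDim]
    exact Order.krullDim_nonpos_of_subsingleton
  have hfin : (minimalPrimes A).Finite := minimalPrimes.finite_of_isNoetherianRing A
  have havoid : ¬ ((maximalIdeal A : Set A) ⊆ ⋃ P ∈ hfin.toFinset, (P : Set A)) := by
    intro hsubset
    have := (Ideal.subset_union_prime (⊥ : Ideal A) ⊥ ?_).mp hsubset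
    · obtain ⟨P, hPmem, hPle⟩ := this
      rw [Set.Finite.mem_toFinset] at hPmem
      have hPprime : P.IsPrime := hPmem.1.1
      have : P = maximalIdeal A :=
        le_antisymm (IsLocalRing.le_maximalIdeal hPprime.ne_top) hPle
      exact hmmax (this ▸ hPmem)
    · intro P hPmem _ _
      rw [Set.Finite.mem_toFinset] at hPmem
      exact hPmem.1.1
  rw [Set.not_subset] at havoid
  obtain ⟨x, hxm, hxnot⟩ := havoid
  simp only [Set.mem_iUnion, Set.Finite.mem_toFinset, SetLike.mem_coe, not_exists] at hxnot
  have hspan_ne : Ideal.span {x} ≠ ⊤ := by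
    intro hc
    have hle : Ideal.span {x} ≤ maximalIdeal A := by
      rw [Ideal.span_le]; simpa using hxm
    rw [hc] at hle
    exact (IsLocalRing.maximalIdeal.isMaximal A).ne_top (top_le_iff.mp hle)
  refine ⟨x, hxm, hspan_ne, ?_⟩
  rw [ringKrullDim]
  refine iSup_le ?_
  intro q
  -- map the chain down to A and extend by a minimal prime
  set mk := Ideal.Quotient.mk (Ideal.span {x}) with hmk
  have hmksurj : Function.Surjective mk := Ideal.Quotient.mk_surjective
  have hsm : StrictMono (PrimeSpectrum.comap mk) := by
    intro P Q hPQ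
    refine lt_of_le_of_ne ?_ ?_
    · rw [← PrimeSpectrum.asIdeal_le_asIdeal]
      exact Ideal.comap_mono ((PrimeSpectrum.asIdeal_le_asIdeal _ _).mpr hPQ.le)
    · intro hc
      apply hPQ.ne
      have := congrArg (fun T : PrimeSpectrum A => Ideal.map mk T.asIdeal) hc
      simp only [PrimeSpectrum.comap_asIdeal] at this
      rw [Ideal.map_comap_of_surjective mk hmksurj,
        Ideal.map_comap_of_surjective mk hmksurj] at this
      exact PrimeSpectrum.ext this
  set q' := q.map (PrimeSpectrum.comap mk) hsm with hq'
  have hx_head : x ∈ q'.head.asIdeal := by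
    have : q'.head = PrimeSpectrum.comap mk q.head := by
      rw [hq']; rfl
    rw [this]
    show x ∈ Ideal.comap mk q.head.asIdeal
    rw [Ideal.mem_comap]
    have : mk x = 0 := by
      rw [hmk, Ideal.Quotient.eq_zero_iff_mem]
      exact Ideal.subset_span rfl
    rw [this]
    exact (q.head.asIdeal).zero_mem
  obtain ⟨P₀, hP₀min, hP₀le⟩ :=
    Ideal.exists_minimalPrimes_le (I := (⊥ : Ideal A)) (J := q'.head.asIdeal) bot_le
  have hP₀prime : P₀.IsPrime := hP₀min.1.1
  have hP₀lt : (⟨P₀, hP₀prime⟩ : PrimeSpectrum A) < q'.head := by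
    refine lt_of_le_of_ne hP₀le ?_
    intro hc
    have : x ∈ P₀ := by
      rw [show P₀ = q'.head.asIdeal from congrArg PrimeSpectrum.asIdeal hc]
      exact hx_head
    exact hxnot P₀ hP₀min this
  set q'' := q'.cons _ hP₀lt with hq''
  have hlen := Order.LTSeries.length_le_krullDim q''
  have hlen' : ((q.length + 1 : ℕ) : WithBot ℕ∞) ≤ ringKrullDim A := by
    have h1 : q''.length = q.length + 1 := by
      simp [hq'', hq']
    rw [ringKrullDim]
    rw [← h1]
    exact_mod_cast hlen
  have := le_trans hlen' hdim
  rw [Nat.cast_le] at this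
  exact_mod_cast Nat.cast_le.mpr (by omega : q.length ≤ c)

end Dim

section SOP

universe v

/-- Pull back a partial system of parameters along a quotient of local rings. -/
lemma sop_pullback {A : Type v} [CommRing A] [IsLocalRing A] (I : Ideal A)
    [IsLocalRing (A ⧸ I)] {c t : ℕ} (x : Fin c → A ⧸ I)
    (hxm : ∀ i, x i ∈ maximalIdeal (A ⧸ I))
    (hpow : maximalIdeal (A ⧸ I) ^ t ≤ Ideal.span (Set.range x)) :
    ∃ y : Fin c → A, (∀ i, y i ∈ maximalIdeal A) ∧
      maximalIdeal A ^ t ≤ Ideal.span (Set.range y) ⊔ I := by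
  set mk := Ideal.Quotient.mk I with hmk
  have hmksurj : Function.Surjective mk := Ideal.Quotient.mk_surjective
  have hcomap : Ideal.comap mk (maximalIdeal (A ⧸ I)) = maximalIdeal A := by
    haveI : (Ideal.comap mk (maximalIdeal (A ⧸ I))).IsMaximal :=
      Ideal.comap_isMaximal_of_surjective mk hmksurj
    exact (IsLocalRing.eq_maximalIdeal this)
  choose y hy using fun i => hmksurj (x i)
  refine ⟨y, ?_, ?_⟩
  · intro i
    rw [← hcomap, Ideal.mem_comap, hy i]
    exact hxm i
  · intro u hu
    have h1 : mk u ∈ Ideal.map mk (maximalIdeal A ^ t) := Ideal.mem_map_of_mem mk hu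
    rw [Ideal.map_pow] at h1
    have h2 : Ideal.map mk (maximalIdeal A) ≤ maximalIdeal (A ⧸ I) := by
      rw [Ideal.map_le_iff_le_comap, hcomap]
    have h3 : mk u ∈ maximalIdeal (A ⧸ I) ^ t := Ideal.pow_right_mono h2 t h1
    have h4 : mk u ∈ Ideal.span (Set.range x) := hpow h3
    have hximg : Set.range x = mk '' Set.range y := by
      rw [← Set.range_comp]
      exact congrArg Set.range (funext fun i => (hy i).symm)
    rw [hximg, ← Ideal.map_span] at h4
    have h5 : u ∈ Ideal.comap mk (Ideal.map mk (Ideal.span (Set.range y))) :=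
      Ideal.mem_comap.mpr h4
    rw [Ideal.comap_map_of_surjective mk hmksurj] at h5
    have hker : Ideal.comap mk (⊥ : Ideal (A ⧸ I)) = I := by
      rw [← RingHom.ker_eq_comap_bot, hmk, Ideal.mk_ker]
    rw [hker] at h5
    exact h5
end SOP

universe w

/-- Existence of a system of parameters in a Noetherian local ring. -/
lemma exists_sop : ∀ (c : ℕ) (A : Type w) [CommRing A] [IsLocalRing A] [IsNoetherianRing A],
    ringKrullDim A ≤ ((c : ℕ) : WithBot ℕ∞) →
    ∃ (x : Fin c → A) (t : ℕ), (∀ i, x i ∈ maximalIdeal A) ∧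
      maximalIdeal A ^ t ≤ Ideal.span (Set.range x) := by
  intro c
  induction c with
  | zero =>
    intro A _ _ _ hdim
    obtain ⟨t, ht⟩ := exists_pow_maximalIdeal_eq_bot (by simpa using hdim)
    exact ⟨fun i => i.elim0, t, fun i => i.elim0, by rw [ht]; exact bot_le⟩
  | succ c IH =>
    intro A _ _ _ hdim
    by_cases h0 : ringKrullDim A ≤ 0
    · obtain ⟨t, ht⟩ := exists_pow_maximalIdeal_eq_bot h0
      exact ⟨fun _ => 0, t, fun _ => Submodule.zero_mem _, by rw [ht]; exact bot_le⟩
    · obtain ⟨x₁, hx₁m, hx₁ne, hdim'⟩ := dim_quotient_le hdim h0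
      haveI : Nontrivial (A ⧸ Ideal.span {x₁}) := Ideal.Quotient.nontrivial_iff.mpr hx₁ne
      haveI : IsLocalRing (A ⧸ Ideal.span {x₁}) :=
        IsLocalRing.of_surjective' (Ideal.Quotient.mk _) Ideal.Quotient.mk_surjective
      obtain ⟨xq, t, hxqm, hxqpow⟩ := IH (A ⧸ Ideal.span {x₁}) hdim'
      obtain ⟨y, hym, hypow⟩ := sop_pullback (Ideal.span {x₁}) xq hxqm hxqpow
      refine ⟨Fin.cons x₁ y, t, ?_, ?_⟩
      · intro i
        refine Fin.cases ?_ ?_ i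
        · exact hx₁m
        · exact hym
      · have hrange : Set.range (Fin.cons x₁ y : Fin (c+1) → A)
            = insert x₁ (Set.range y) := by
          rw [Fin.range_cons]
        rw [hrange, Ideal.span_insert]
        calc maximalIdeal A ^ t ≤ Ideal.span (Set.range y) ⊔ Ideal.span {x₁} := hypow
          _ = Ideal.span {x₁} ⊔ Ideal.span (Set.range y) := sup_comm _ _


theorem length_quotient_le_const_mul_q_pow_dim
    (R : Type*) [CommRing R] [IsLocalRing R] [IsNoetherianRing R]
    (p : ℕ) [Fact p.Prime] [CharP R p]
    (d : ℕ) (hdim : ringKrullDim R = d)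
    (M : Type*) [AddCommGroup M] [Module R M] [Module.Finite R M]
    (dM : ℕ) (hdimM : ringKrullDim (R ⧸ Module.annihilator R M) = dM) :
    ∃ C : ℝ, 0 < C ∧ ∀ e : ℕ, ∀ I : Ideal R, IsMPrimary I →
      frobPow (maximalIdeal R) (p ^ e) ≤ I →
      (len R (M ⧸ (I • (⊤ : Submodule R M))) : ℝ) ≤ C * (p : ℝ) ^ (e * dM) := by
  classical
  -- the annihilator is a proper ideal
  have hann : Module.annihilator R M ≠ ⊤ := by
    intro htop
    have : Subsingleton (R ⧸ Module.annihilator R M) := by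
      rw [htop]
      exact Ideal.Quotient.subsingleton_iff.mpr rfl
    have hempty : IsEmpty (PrimeSpectrum (R ⧸ Module.annihilator R M)) := inferInstance
    rw [ringKrullDim, Order.krullDim_eq_bot] at hdimM
    exact absurd hdimM.symm (by simp)
  haveI : Nontrivial (R ⧸ Module.annihilator R M) := Ideal.Quotient.nontrivial_iff.mpr hann
  haveI : IsLocalRing (R ⧸ Module.annihilator R M) :=
    IsLocalRing.of_surjective' (Ideal.Quotient.mk _) Ideal.Quotient.mk_surjective
  -- a system of parameters for M
  obtain ⟨x, t, hxm, hxpow⟩ := exists_sop dM (R ⧸ Module.annihilator R M) (le_of_eq hdimM)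
  obtain ⟨y, hym, hypow⟩ := sop_pullback (Module.annihilator R M) x hxm hxpow
  -- the base module K₀ = M / (y) M has finite length
  set Jy : Ideal R := Ideal.span (Set.range y) with hJy
  have htor : (maximalIdeal R ^ t) • (⊤ : Submodule R (M ⧸ (Jy • (⊤ : Submodule R M)))) = ⊥ := by
    rw [eq_bot_iff]
    apply Submodule.smul_le.mpr
    rintro r hr z -
    obtain ⟨u, rfl⟩ := Submodule.mkQ_surjective _ z
    have hru : r ∈ Jy ⊔ Module.annihilator R M := hypow hr
    obtain ⟨s, hs, a, ha, rfl⟩ := Submodule.mem_sup.mp hru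
    have h1 : ((s + a) • u : M) = s • u + a • u := add_smul s a u
    have h2 : (a • u : M) = 0 := Module.mem_annihilator.mp ha u
    have h3 : (s • u : M) ∈ Jy • (⊤ : Submodule R M) := Submodule.smul_mem_smul hs trivial
    have : (s + a) • (Jy • (⊤ : Submodule R M)).mkQ u
        = (Jy • (⊤ : Submodule R M)).mkQ ((s + a) • u) := by
      rw [map_smul]
    rw [this, h1, h2, add_zero, Submodule.mem_bot]
    exact (Submodule.Quotient.mk_eq_zero _).mpr h3
  obtain ⟨ℓ, hℓ⟩ := exists_lenLE_of_pow_smul_eq_bot t (M ⧸ (Jy • (⊤ : Submodule R M))) htor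
  refine ⟨(ℓ : ℝ) + 1, by positivity, ?_⟩
  intro e I _ hIfrob
  set q := p ^ e with hq
  -- rewrite the base bound in list form
  set l : List R := List.ofFn y with hl
  have hsetl : {z : R | z ∈ l} = Set.range y := by
    ext z
    simp [hl, List.mem_ofFn]
  have h0 : LenLE R (M ⧸ (((⊥ : Ideal R) ⊔ Ideal.span {z | z ∈ l}) • (⊤ : Submodule R M))) ℓ := by
    rw [show ((⊥ : Ideal R) ⊔ Ideal.span {z | z ∈ l}) = Jy by rw [bot_sup_eq, hsetl]]
    exact hℓ
  have hB := lemB q l ⊥ ℓ h0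
  rw [show l.length = dM by simp [hl]] at hB
  -- compare with I
  have hJqI : ((⊥ : Ideal R) ⊔ Ideal.span ((fun z => z ^ q) '' {z | z ∈ l})) ≤ I := by
    rw [bot_sup_eq]
    refine le_trans ?_ hIfrob
    rw [frobPow]
    apply Ideal.span_mono
    rw [hsetl]
    rintro w ⟨z, hz, rfl⟩
    exact ⟨z, by rcases hz with ⟨i, rfl⟩; exact hym i, rfl⟩
  have hfinal : LenLE R (M ⧸ (I • (⊤ : Submodule R M))) (q ^ dM * ℓ) := by
    refine LenLE.of_quot_surj (I • (⊤ : Submodule R M)).mkQ (Submodule.mkQ_surjective _)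
      (((⊥ : Ideal R) ⊔ Ideal.span ((fun z => z ^ q) '' {z | z ∈ l})) • ⊤) ?_ hB
    rw [Submodule.ker_mkQ]
    exact Submodule.smul_mono_left hJqI
  have hlen : len R (M ⧸ (I • (⊤ : Submodule R M))) ≤ q ^ dM * ℓ := len_le_of_lenLE hfinal
  have hcast : ((q ^ dM * ℓ : ℕ) : ℝ) = (ℓ : ℝ) * (p : ℝ) ^ (e * dM) := by
    have hqq : (q : ℝ) ^ dM = (p : ℝ) ^ (e * dM) := by
      rw [hq]
      push_cast
      rw [← pow_mul]
    push_cast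
    rw [hqq]
    ring
  calc (len R (M ⧸ (I • (⊤ : Submodule R M))) : ℝ) ≤ ((q ^ dM * ℓ : ℕ) : ℝ) := by
        exact_mod_cast hlen
    _ = (ℓ : ℝ) * (p : ℝ) ^ (e * dM) := hcast
    _ ≤ ((ℓ : ℝ) + 1) * (p : ℝ) ^ (e * dM) := by
        have hp0 : (0:ℝ) ≤ (p : ℝ) ^ (e * dM) := by positivity
        nlinarith
end

section
/- Let R be a Noetherian ring of prime characteristic p and I an ideal. Then x ∈ I* if and only if for every minimal prime P of R, the image of x in R/P lies in the tight closure of (I+P)/P. -/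
/-- The tight closure of an ideal `I` in a ring of characteristic `p`:
`x ∈ I*` iff there is `c` outside every minimal prime with `c x^q ∈ I^[q]`
for all large `q = p^e`. -/
def tightClosure {R : Type*} [CommRing R] (p : ℕ) (I : Ideal R) : Set R :=
  {x | ∃ c : R, (∀ P ∈ minimalPrimes R, c ∉ P) ∧
    ∃ N : ℕ, ∀ e : ℕ, N ≤ e → c * x ^ p ^ e ∈ frobPow I (p ^ e)}

lemma pow_mem_frobPow' {R : Type*} [CommRing R] {I : Ideal R} {q : ℕ} {a : R} (ha : a ∈ I) :
    a ^ q ∈ frobPow I q :=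
  Ideal.subset_span ⟨a, ha, rfl⟩

lemma frobPow_map_le {R S : Type*} [CommRing R] [CommRing S] (f : R →+* S)
    (I : Ideal R) (q : ℕ) : (frobPow I q).map f ≤ frobPow (I.map f) q := by
  rw [frobPow, Ideal.map_span]
  apply Ideal.span_le.2
  rintro _ ⟨_, ⟨a, ha, rfl⟩, rfl⟩
  rw [map_pow]
  exact pow_mem_frobPow' (Ideal.mem_map_of_mem f ha)

lemma frobPow_map_ge {R S : Type*} [CommRing R] [CommRing S] (f : R →+* S)
    (hf : Function.Surjective f) (I : Ideal R) (q : ℕ) :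
    frobPow (I.map f) q ≤ (frobPow I q).map f := by
  rw [frobPow, Ideal.span_le]
  rintro _ ⟨y, hy, rfl⟩
  obtain ⟨a, ha, rfl⟩ := (Ideal.mem_map_iff_of_surjective f hf).1 hy
  show f a ^ q ∈ (Ideal.map f (frobPow I q) : Set S)
  rw [← map_pow]
  exact Ideal.mem_map_of_mem f (pow_mem_frobPow' ha)

lemma pow_mem_frobPow_mul {R : Type*} [CommRing R] {p : ℕ} [Fact p.Prime] [CharP R p]
    {I : Ideal R} {q : ℕ} {y : R} (hy : y ∈ frobPow I q) (m : ℕ) :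
    y ^ p ^ m ∈ frobPow I (q * p ^ m) := by
  have hp : p ≠ 0 := (Fact.out : p.Prime).ne_zero
  refine Submodule.span_induction ?_ ?_ ?_ ?_ hy
  · rintro _ ⟨a, ha, rfl⟩
    rw [← pow_mul]
    exact pow_mem_frobPow' ha
  · rw [zero_pow (pow_ne_zero _ hp)]
    exact Ideal.zero_mem _
  · intro a b _ _ ha hb
    rw [add_pow_char_pow]
    exact Ideal.add_mem _ ha hb
  · intro r a _ ha
    rw [smul_eq_mul, mul_pow]
    exact Ideal.mul_mem_left _ _ ha

lemma bot_mem_minimalPrimes_quotient {R : Type*} [CommRing R] {P : Ideal R} [P.IsPrime] :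
    minimalPrimes (R ⧸ P) = {⊥} := by
  have : (⊥ : Ideal (R ⧸ P)).IsPrime := Ideal.bot_prime
  exact Ideal.minimalPrimes_eq_subsingleton_self

theorem mem_tightClosure_iff_forall_minimalPrime
    (R : Type*) [CommRing R] [IsNoetherianRing R]
    (p : ℕ) [Fact p.Prime] [CharP R p]
    (I : Ideal R) (x : R) :
    x ∈ tightClosure p I ↔
      ∀ P ∈ minimalPrimes R,
        Ideal.Quotient.mk P x ∈
          tightClosure p (I.map (Ideal.Quotient.mk P)) := by
  classical
  have hp : p.Prime := Fact.out
  constructor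
  · rintro ⟨c, hc, N, hN⟩ P hP
    haveI hPp : P.IsPrime := hP.1.1
    refine ⟨Ideal.Quotient.mk P c, ?_, N, fun e he => ?_⟩
    · intro Q hQ
      rw [bot_mem_minimalPrimes_quotient] at hQ
      rw [hQ, Ideal.mem_bot, Ideal.Quotient.eq_zero_iff_mem]
      exact hc P hP
    · have := Ideal.mem_map_of_mem (Ideal.Quotient.mk P) (hN e he)
      rw [map_mul, map_pow] at this
      exact frobPow_map_le _ _ _ this
  · intro H
    -- Step 1: pull back the data for each minimal prime
    have key : ∀ P ∈ minimalPrimes R, ∃ c : R, c ∉ P ∧ ∃ N : ℕ, ∀ e : ℕ, N ≤ e →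
        c * x ^ p ^ e ∈ frobPow I (p ^ e) ⊔ P := by
      intro P hP
      haveI hPp : P.IsPrime := hP.1.1
      obtain ⟨cb, hcb, N, hN⟩ := H P hP
      obtain ⟨c, rfl⟩ := Ideal.Quotient.mk_surjective cb
      refine ⟨c, ?_, N, fun e he => ?_⟩
      · intro hcP
        exact hcb ⊥ (by rw [bot_mem_minimalPrimes_quotient]; rfl)
          (Ideal.mem_bot.2 (Ideal.Quotient.eq_zero_iff_mem.2 hcP))
      · have h1 := frobPow_map_ge (Ideal.Quotient.mk P) Ideal.Quotient.mk_surjective I (p ^ e)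
          (hN e he)
        rw [← map_pow, ← map_mul] at h1
        obtain ⟨y, hy, hyeq⟩ := (Ideal.mem_map_iff_of_surjective _
          Ideal.Quotient.mk_surjective).1 h1
        have hzP : c * x ^ p ^ e - y ∈ P := by
          rw [← Ideal.Quotient.eq_zero_iff_mem, map_sub, hyeq, sub_self]
        exact Submodule.mem_sup.2 ⟨y, hy, c * x ^ p ^ e - y, hzP, by ring⟩
    -- Step 2: for each minimal prime find d avoiding it but in all others
    have hfin : (minimalPrimes R).Finite := minimalPrimes.finite_of_isNoetherianRing R
    set s : Finset (Ideal R) := hfin.toFinset with hs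
    have hmem_s : ∀ P, P ∈ s ↔ P ∈ minimalPrimes R := fun P => hfin.mem_toFinset
    have avoid : ∀ P ∈ minimalPrimes R, ∃ d : R, d ∉ P ∧
        ∀ Q ∈ minimalPrimes R, Q ≠ P → d ∈ Q := by
      intro P hP
      haveI hPp : P.IsPrime := hP.1.1
      have hnle : ¬ (s.erase P).inf id ≤ P := by
        intro hle
        obtain ⟨Q, hQs, hQle⟩ := hPp.inf_le'.1 hle
        have hQmp : Q ∈ minimalPrimes R := (hmem_s Q).1 (Finset.mem_of_mem_erase hQs)
        have : P ≤ Q := hP.2 ⟨hQmp.1.1, bot_le⟩ hQle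
        exact (Finset.ne_of_mem_erase hQs) (le_antisymm hQle this)
      obtain ⟨d, hdJ, hdP⟩ := SetLike.not_le_iff_exists.1 hnle
      refine ⟨d, hdP, fun Q hQ hQne => ?_⟩
      have hle : (s.erase P).inf id ≤ Q :=
        Finset.inf_le (Finset.mem_erase.2 ⟨hQne, (hmem_s Q).2 hQ⟩)
      exact hle hdJ
    -- Step 3: assemble the data
    choose cc hcc Nc hNc using key
    choose dd hdd1 hdd2 using avoid
    have hm : ∀ P : {P // P ∈ s}, P.1 ∈ minimalPrimes R := fun P => (hmem_s P.1).1 P.2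
    set f : {P // P ∈ s} → R := fun P => dd P.1 (hm P) * cc P.1 (hm P) with hf
    set c : R := ∑ P ∈ s.attach, f P with hcdef
    -- c is outside every minimal prime
    have hcout : ∀ P ∈ minimalPrimes R, c ∉ P := by
      intro P0 hP0 hcP0
      haveI hP0p : P0.IsPrime := hP0.1.1
      set P0' : {P // P ∈ s} := ⟨P0, (hmem_s P0).2 hP0⟩ with hP0'
      have hrest : ∑ Q ∈ s.attach.erase P0', f Q ∈ P0 := by
        refine Ideal.sum_mem _ (fun Q hQ => ?_)
        have hQne : P0 ≠ Q.1 := by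
          intro h
          exact (Finset.mem_erase.1 hQ).1 (Subtype.ext h.symm)
        exact Ideal.mul_mem_right _ _ (hdd2 Q.1 (hm Q) P0 hP0 hQne)
      have hsum : f P0' + ∑ Q ∈ s.attach.erase P0', f Q = c :=
        Finset.add_sum_erase s.attach f (Finset.mem_attach _ _)
      have hfP0 : f P0' ∈ P0 := by
        have : f P0' = c - ∑ Q ∈ s.attach.erase P0', f Q := by
          rw [← hsum]; ring
        rw [this]
        exact Ideal.sub_mem _ hcP0 hrest
      rcases hP0p.mem_or_mem hfP0 with h | h
      · exact hdd1 P0 (hm P0') h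
      · exact hcc P0 (hm P0') h
    -- c * x^q lands in frobPow I q ⊔ nilradical R for large q
    set Nmax : ℕ := s.attach.sup (fun P => Nc P.1 (hm P)) with hNmax
    have hBig : ∀ e : ℕ, Nmax ≤ e →
        c * x ^ p ^ e ∈ frobPow I (p ^ e) ⊔ nilradical R := by
      intro e he
      rw [hcdef, Finset.sum_mul]
      refine Ideal.sum_mem _ (fun P _ => ?_)
      have hNe : Nc P.1 (hm P) ≤ e :=
        le_trans (Finset.le_sup (f := fun P => Nc P.1 (hm P)) (Finset.mem_attach _ P)) he
      obtain ⟨y, hy, z, hz, hyz⟩ := Submodule.mem_sup.1 (hNc P.1 (hm P) e hNe)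
      have hsplit : f P * x ^ p ^ e = dd P.1 (hm P) * y + dd P.1 (hm P) * z := by
        rw [hf]
        show dd P.1 (hm P) * cc P.1 (hm P) * x ^ p ^ e = _
        rw [mul_assoc, ← hyz, mul_add]
      rw [hsplit]
      refine Ideal.add_mem _ ?_ ?_
      · exact Submodule.mem_sup_left (Ideal.mul_mem_left _ _ hy)
      · refine Submodule.mem_sup_right ?_
        rw [nilradical_eq_sInf]
        refine Ideal.mem_sInf.2 (fun J hJ => ?_)
        haveI : J.IsPrime := hJ
        obtain ⟨Q, hQmp, hQle⟩ := Ideal.exists_minimalPrimes_le (bot_le : ⊥ ≤ J)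
        have hQmp' : Q ∈ minimalPrimes R := hQmp
        by_cases hQP : Q = P.1
        · exact hQle (Ideal.mul_mem_left _ _ (by rw [hQP]; exact hz))
        · exact hQle (Ideal.mul_mem_right _ _ (hdd2 P.1 (hm P) Q hQmp' hQP))
    -- kill the nilpotents by taking p^k-th powers
    obtain ⟨k, hk⟩ := IsNoetherianRing.isNilpotent_nilradical R
    refine ⟨c ^ p ^ k, fun P hP hcP => ?_, Nmax + k, fun e he => ?_⟩
    · exact hcout P hP ((hP.1.1).mem_of_pow_mem _ hcP)
    · set e' : ℕ := e - k with he'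
      have hek : e' + k = e := by omega
      have he'N : Nmax ≤ e' := by omega
      obtain ⟨y, hy, n, hn, hyz⟩ := Submodule.mem_sup.1 (hBig e' he'N)
      have hnz : n ^ p ^ k = 0 := by
        have h1 : n ^ p ^ k ∈ nilradical R ^ p ^ k := Ideal.pow_mem_pow hn _
        have h2 : nilradical R ^ p ^ k ≤ nilradical R ^ k :=
          Ideal.pow_le_pow_right (Nat.lt_pow_self (n := k) hp.one_lt).le
        have := h2 h1
        rw [hk] at this
        simpa using this
      have h3 := pow_mem_frobPow_mul (p := p) hy k
      rw [← pow_add, hek] at h3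
      have h4 : c ^ p ^ k * x ^ p ^ e = y ^ p ^ k := by
        have hstep : c ^ p ^ k * x ^ p ^ e = (c * x ^ p ^ e') ^ p ^ k := by
          rw [mul_pow, ← pow_mul, ← pow_add, hek]
        rw [hstep, ← hyz, add_pow_char_pow (p := p), hnz, add_zero]
      rw [h4]
      exact h3
end
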